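/- arXiv:0805.3742 — 5 statements merged into one kernel-verified Lean document; each statement's English description precedes it below -/
import Mathlib

section
/- Let G be a finite group, H a normal subgroup of G that is a 2-group, and let n = 2k+1 be odd. Suppose a, b ∈ G both have order n, that a⁻¹·b ∈ H, and that G = H·⟨a⟩ (so G is a split extension of H by a cyclic group of order n). Then, with g = (b·a)^k, the element (g⁻¹·a·g)·b⁻¹ lies in the Frattini subgroup Φ(H) of H; that is, b ≡ a^g modulo Φ(H). -/
open Subgroup

lemma frattini_mem_iff {P : Type*} [Group P] (x : P) :
    x ∈ frattini P ↔ ∀ M : Subgroup P, IsCoatom M → x ∈ M := by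
  simp [frattini, Order.radical, Subgroup.mem_iInf]

lemma pgroup_coatom {P : Type*} [Group P] [Finite P] {p : ℕ} (hp : p.Prime)
    (hP : IsPGroup p P) {M : Subgroup P} (hM : IsCoatom M) :
    (∀ x : P, x ^ p ∈ M) ∧ (∀ x y : P, x * y * x⁻¹ * y⁻¹ ∈ M) := by
  haveI : Fact p.Prime := ⟨hp⟩
  have htfae := (isNilpotent_of_finite_tfae (G := P)).out 0 2
  have hnorm : M.Normal := htfae.mp hP.isNilpotent M hM
  have hsurj : Function.Surjective (QuotientGroup.mk' M) := QuotientGroup.mk'_surjective M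
  -- every subgroup of Q is bot or top
  have hbt : ∀ S : Subgroup (P ⧸ M), S = ⊥ ∨ S = ⊤ := by
    intro S
    have hle : M ≤ S.comap (QuotientGroup.mk' M) := by
      intro x hx
      have : QuotientGroup.mk' M x = 1 := (QuotientGroup.eq_one_iff x).mpr hx
      simp only [Subgroup.mem_comap, this]
      exact S.one_mem
    rcases hle.lt_or_eq with h | h
    · right
      have h2 := hM.2 _ h
      have h3 := congrArg (Subgroup.map (QuotientGroup.mk' M)) h2
      rwa [Subgroup.map_comap_eq_self_of_surjective hsurj,
        Subgroup.map_top_of_surjective _ hsurj] at h3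
    · left
      have h3 := congrArg (Subgroup.map (QuotientGroup.mk' M)) h.symm
      rw [Subgroup.map_comap_eq_self_of_surjective hsurj] at h3
      rw [h3, Subgroup.map_eq_bot_iff, QuotientGroup.ker_mk']
  have hQp : IsPGroup p (P ⧸ M) := hP.to_quotient M
  -- every nontrivial element generates Q
  have hgen : ∀ q : P ⧸ M, q ≠ 1 → Subgroup.zpowers q = ⊤ := by
    intro q hq
    rcases hbt (Subgroup.zpowers q) with h | h
    · exact absurd (Subgroup.zpowers_eq_bot.mp h) hq
    · exact h
  -- q ^ p = 1 for all q
  have hpow : ∀ q : P ⧸ M, q ^ p = 1 := by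
    intro q
    by_cases hq : q = 1
    · simp [hq]
    obtain ⟨m, hm⟩ := hQp q
    have hdvd : orderOf q ∣ p ^ m := orderOf_dvd_of_pow_eq_one hm
    obtain ⟨j, hj, hoq⟩ := (Nat.dvd_prime_pow hp).mp hdvd
    have hj1 : 1 ≤ j := by
      rcases Nat.eq_zero_or_pos j with rfl | h
      · simp at hoq
        exact absurd hoq hq
      · exact h
    by_contra hqp
    have h1 : Subgroup.zpowers (q ^ p) = ⊤ := hgen _ hqp
    have h2 : Subgroup.zpowers q = ⊤ := hgen _ hq
    have hcard : orderOf (q ^ p) = orderOf q := by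
      rw [← Nat.card_zpowers, ← Nat.card_zpowers, h1, h2]
    have hlt : orderOf (q ^ p) < orderOf q := by
      have hpd : p ∣ orderOf q := by
        rw [hoq]
        exact dvd_pow_self p (by omega)
      rw [orderOf_pow_of_dvd hp.ne_zero hpd]
      have hpos : 0 < orderOf q := by
        rw [hoq]; exact pow_pos hp.pos j
      exact Nat.div_lt_self hpos hp.one_lt
    omega
  constructor
  · intro x
    have := hpow (QuotientGroup.mk' M x)
    rw [← map_pow] at this
    exact (QuotientGroup.eq_one_iff _).mp this
  · intro x y
    -- Q is cyclic hence commutative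
    have hcomm : ∀ u v : P ⧸ M, u * v = v * u := by
      intro u v
      by_cases hu : u = 1
      · simp [hu]
      have := hgen u hu
      have hv : v ∈ Subgroup.zpowers u := this ▸ Subgroup.mem_top v
      obtain ⟨i, rfl⟩ := hv
      exact Commute.zpow_right (Commute.refl u) i
    have : QuotientGroup.mk' M (x * y * x⁻¹ * y⁻¹) = 1 := by
      simp only [map_mul, map_inv]
      rw [hcomm (QuotientGroup.mk' M x) (QuotientGroup.mk' M y)]
      group
    exact (QuotientGroup.eq_one_iff _).mp this

open Subgroup Finset
open scoped IsMulCommutative commutatorElement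

/-- conjugation sequence -/
def conjSeq {Q : Type*} [Group Q] (V : Subgroup Q) [hn : V.Normal] (h : V) (c : Q) (j : ℕ) :
    V := ⟨(c ^ j)⁻¹ * ↑h * c ^ j, by simpa using hn.conj_mem ↑h h.2 (c ^ j)⁻¹⟩

lemma conjSeq_coe {Q : Type*} [Group Q] (V : Subgroup Q) [V.Normal] (h : V) (c : Q) (j : ℕ) :
    (conjSeq V h c j : Q) = (c ^ j)⁻¹ * ↑h * c ^ j := rfl

lemma conj_pow_formula {Q : Type*} [Group Q] (V : Subgroup Q) [V.Normal] [IsMulCommutative V]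
    (h : V) (c : Q) (m : ℕ) :
    (c * ↑h) ^ m = c ^ m * ↑(∏ j ∈ Finset.range m, conjSeq V h c j) := by
  induction m with
  | zero => simp
  | succ m ih =>
    let e : MulAut V := MulAut.conjNormal c⁻¹
    have he : ∀ j, e (conjSeq V h c j) = conjSeq V h c (j + 1) := by
      intro j
      ext
      simp only [e, MulAut.conjNormal_apply, conjSeq_coe, inv_inv, pow_succ]
      group
    have hmap : c⁻¹ * ↑(∏ j ∈ Finset.range m, conjSeq V h c j) * c
        = ↑(∏ j ∈ Finset.range m, conjSeq V h c (j + 1)) := by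
      calc c⁻¹ * ↑(∏ j ∈ Finset.range m, conjSeq V h c j) * c
          = ↑(e (∏ j ∈ Finset.range m, conjSeq V h c j)) := by
            simp only [e, MulAut.conjNormal_apply, inv_inv]
        _ = ↑(∏ j ∈ Finset.range m, conjSeq V h c (j + 1)) := by
            rw [map_prod]
            exact congrArg _ (Finset.prod_congr rfl fun j _ => he j)
    calc (c * ↑h) ^ (m + 1) = (c * ↑h) ^ m * (c * ↑h) := pow_succ _ _
      _ = c ^ m * ↑(∏ j ∈ Finset.range m, conjSeq V h c j) * (c * ↑h) := by rw [ih]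
      _ = c ^ (m + 1) * ((c⁻¹ * ↑(∏ j ∈ Finset.range m, conjSeq V h c j) * c) * ↑h) := by
          rw [pow_succ]; group
      _ = c ^ (m + 1) * (↑(∏ j ∈ Finset.range m, conjSeq V h c (j + 1)) * ↑(conjSeq V h c 0)) := by
          rw [hmap]
          congr 1
          simp [conjSeq_coe]
      _ = c ^ (m + 1) * ↑(∏ j ∈ Finset.range (m + 1), conjSeq V h c j) := by
          rw [← Subgroup.coe_mul, ← Finset.prod_range_succ']

lemma prod_range_even_odd {M : Type*} [CommMonoid M] (f : ℕ → M) (k : ℕ) :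
    ∏ m ∈ Finset.range (2 * k), f m
      = (∏ j ∈ Finset.range k, f (2 * j)) * ∏ j ∈ Finset.range k, f (2 * j + 1) := by
  induction k with
  | zero => simp
  | succ k ih =>
    have : 2 * (k + 1) = (2 * k + 1) + 1 := by ring
    rw [this, Finset.prod_range_succ, Finset.prod_range_succ, ih,
      Finset.prod_range_succ, Finset.prod_range_succ]
    rw [mul_assoc, mul_mul_mul_comm]

/-- "The Formula": let `G` be a finite group, `H` a normal 2-subgroup, and `n = 2k+1` odd.
If `a, b ∈ G` both have order `n`, are congruent modulo `H`, and `G = H⟨a⟩`, then with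
`g = (b*a)^k` one has `b ≡ a^g` modulo the Frattini subgroup `Φ(H)` of `H`. -/
theorem the_formula {G : Type*} [Group G] [Finite G] (H : Subgroup G) [H.Normal]
    (hH : IsPGroup 2 H) (k : ℕ) (a b : G)
    (ha : orderOf a = 2 * k + 1) (hb : orderOf b = 2 * k + 1)
    (hab : a⁻¹ * b ∈ H)
    (hgen : H ⊔ Subgroup.zpowers a = ⊤) :
    (((b * a) ^ k)⁻¹ * a * (b * a) ^ k) * b⁻¹ ∈ (frattini ↥H).map H.subtype := by
  classical
  set K : Subgroup G := (frattini ↥H).map H.subtype with hK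
  -- frattini facts
  have hfr2 : ∀ z : ↥H, z * z ∈ frattini ↥H := by
    intro z
    rw [frattini_mem_iff]
    intro M hM
    have := (pgroup_coatom Nat.prime_two hH hM).1 z
    rwa [pow_two] at this
  have hfrc : ∀ z w : ↥H, z * w * z⁻¹ * w⁻¹ ∈ frattini ↥H := by
    intro z w
    rw [frattini_mem_iff]
    intro M hM
    exact (pgroup_coatom Nat.prime_two hH hM).2 z w
  -- K is normal in G
  haveI hKnorm : K.Normal := by
    constructor
    rintro x ⟨y, hy, rfl⟩ g
    have h1 : (frattini ↥H).comap (MulAut.conjNormal g : MulAut ↥H).toMonoidHom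
        = frattini ↥H := ((frattini_characteristic (G := ↥H)).fixed (MulAut.conjNormal g))
    refine ⟨MulAut.conjNormal g y, ?_, by simp⟩
    rw [← h1] at hy
    exact Subgroup.mem_comap.mp hy
  set π := QuotientGroup.mk' K with hπ
  have hπsurj : Function.Surjective π := QuotientGroup.mk'_surjective K
  set V : Subgroup (G ⧸ K) := H.map π with hV
  haveI hVnorm : V.Normal := Subgroup.Normal.map ‹H.Normal› π hπsurj
  -- squares in V are trivial
  have hsq : ∀ x ∈ H, π x * π x = 1 := by
    intro x hx
    rw [← map_mul]
    apply (QuotientGroup.eq_one_iff _).mpr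
    exact ⟨(⟨x, hx⟩ : ↥H) * ⟨x, hx⟩, hfr2 _, rfl⟩
  have hsqV : ∀ v : ↥V, v * v = 1 := by
    rintro ⟨v, hv⟩
    obtain ⟨x, hx, rfl⟩ := hv
    ext
    exact hsq x hx
  -- elements of V commute
  have hcm : ∀ x ∈ H, ∀ y ∈ H, π x * π y = π y * π x := by
    intro x hx y hy
    have h1 : ⁅π x, π y⁆ = 1 := by
      show π x * π y * (π x)⁻¹ * (π y)⁻¹ = 1
      rw [← map_inv, ← map_inv, ← map_mul, ← map_mul, ← map_mul]
      apply (QuotientGroup.eq_one_iff _).mpr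
      refine ⟨(⟨x, hx⟩ : ↥H) * ⟨y, hy⟩ * (⟨x, hx⟩ : ↥H)⁻¹ * (⟨y, hy⟩ : ↥H)⁻¹, hfrc _ _, rfl⟩
    exact (commutatorElement_eq_one_iff_commute.mp h1).eq
  haveI hVcomm : IsMulCommutative V := by
    constructor
    constructor
    rintro ⟨u, hu⟩ ⟨v, hv⟩
    obtain ⟨x, hx, rfl⟩ := hu
    obtain ⟨y, hy, rfl⟩ := hv
    ext
    exact hcm x hx y hy
  -- main computation in the quotient
  set A : G ⧸ K := π a with hA
  set B : G ⧸ K := π b with hB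
  have hAn : A ^ (2 * k + 1) = 1 := by
    rw [hA, ← map_pow, ← ha, pow_orderOf_eq_one, map_one]
  have hBn : B ^ (2 * k + 1) = 1 := by
    rw [hB, ← map_pow, ← hb, pow_orderOf_eq_one, map_one]
  have hvmem : A⁻¹ * B ∈ V := ⟨a⁻¹ * b, hab, by rw [map_mul, map_inv]⟩
  set hv : ↥V := ⟨A⁻¹ * B, hvmem⟩ with hhv
  have hBeq : B = A * ↑hv := by
    show B = A * (A⁻¹ * B); group
  have hABeq : A * B = A ^ 2 * ↑hv := by
    show A * B = A ^ 2 * (A⁻¹ * B); group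
  set χ : ℕ → ↥V := conjSeq V hv A with hχ
  -- the norm relation from B ^ n = 1
  have hprodn : ∏ j ∈ Finset.range (2 * k + 1), χ j = 1 := by
    have h1 := conj_pow_formula V hv A (2 * k + 1)
    rw [← hBeq, hBn, hAn, one_mul] at h1
    exact (OneMemClass.coe_eq_one.mp h1.symm)
  set P2 : ↥V := ∏ j ∈ Finset.range k, conjSeq V hv (A ^ 2) j with hP2
  have hABk : (A * B) ^ k = A ^ (2 * k) * ↑P2 := by
    rw [hABeq, conj_pow_formula V hv (A ^ 2) k, ← pow_mul]
  have hP2' : P2 = ∏ j ∈ Finset.range k, χ (2 * j) := by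
    rw [hP2]
    refine Finset.prod_congr rfl fun j _ => ?_
    ext
    rw [conjSeq_coe, conjSeq_coe, ← pow_mul]
  -- t = (A*B)^k * A
  have htv : (A * B) ^ k * A = ↑(∏ j ∈ Finset.range k, χ (2 * j + 1)) := by
    rw [hABk]
    calc A ^ (2 * k) * ↑P2 * A
        = A ^ (2 * k) * A * (A⁻¹ * ↑P2 * A) := by group
      _ = A ^ (2 * k + 1) * (A⁻¹ * ↑P2 * A) := by rw [pow_succ]
      _ = A⁻¹ * ↑P2 * A := by rw [hAn, one_mul]
      _ = ↑(MulAut.conjNormal A⁻¹ P2) := by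
          simp only [MulAut.conjNormal_apply, inv_inv]
      _ = ↑(∏ j ∈ Finset.range k, χ (2 * j + 1)) := by
          rw [hP2', map_prod]
          congr 1
          refine Finset.prod_congr rfl fun j _ => ?_
          ext
          simp only [MulAut.conjNormal_apply, inv_inv, conjSeq_coe, hχ]
          rw [pow_succ]
          group
  -- u = B * (A*B)^k
  have huv : B * (A * B) ^ k = ↑(χ (2 * k) * P2) := by
    rw [hABk, hBeq]
    have h2 : (hv : G ⧸ K) * A ^ (2 * k) = A ^ (2 * k) * ↑(χ (2 * k)) := by
      rw [hχ, conjSeq_coe]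
      group
    calc A * ↑hv * (A ^ (2 * k) * ↑P2)
        = A * ((hv : G ⧸ K) * A ^ (2 * k)) * ↑P2 := by group
      _ = A * (A ^ (2 * k) * ↑(χ (2 * k))) * ↑P2 := by rw [h2]
      _ = A ^ (2 * k + 1) * (↑(χ (2 * k)) * ↑P2) := by rw [pow_succ']; group
      _ = ↑(χ (2 * k)) * ↑P2 := by rw [hAn, one_mul]
      _ = ↑(χ (2 * k) * P2) := by rw [Subgroup.coe_mul]
  -- the combinatorial identity in the commutative group V
  have hfinal : (∏ j ∈ Finset.range k, χ (2 * j + 1)) = χ (2 * k) * P2 := by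
    rw [hP2']
    set X := ∏ j ∈ Finset.range k, χ (2 * j + 1) with hX
    set Y := χ (2 * k) * ∏ j ∈ Finset.range k, χ (2 * j) with hY
    have hXY : X * Y = 1 := by
      have hsplit : (∏ j ∈ Finset.range k, χ (2 * j))
          * (∏ j ∈ Finset.range k, χ (2 * j + 1)) * χ (2 * k) = 1 := by
        rw [← prod_range_even_odd, ← Finset.prod_range_succ]
        exact hprodn
      calc X * Y = (∏ j ∈ Finset.range k, χ (2 * j)) * X * χ (2 * k) := by
            rw [hY]; ac_rfl
        _ = 1 := hsplit
    have hYY : Y * Y = 1 := hsqV Y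
    exact mul_right_cancel (hXY.trans hYY.symm)
  -- put it together
  have ht : A * (B * A) ^ k = (A * B) ^ k * A := by
    have : SemiconjBy A (B * A) (A * B) := by
      show A * (B * A) = A * B * A
      group
    exact (this.pow_right k).eq
  have hu : B * (A * B) ^ k = (B * A) ^ k * B := by
    have : SemiconjBy B (A * B) (B * A) := by
      show B * (A * B) = B * A * B
      group
    exact (this.pow_right k).eq
  have key : A * (B * A) ^ k = (B * A) ^ k * B := by
    rw [ht, htv, hfinal, ← huv, hu]
  have hgoal : π (((b * a) ^ k)⁻¹ * a * (b * a) ^ k * b⁻¹) = 1 := by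
    simp only [map_mul, map_inv, map_pow]
    rw [← hA, ← hB]
    calc ((B * A) ^ k)⁻¹ * A * (B * A) ^ k * B⁻¹
        = ((B * A) ^ k)⁻¹ * (A * (B * A) ^ k) * B⁻¹ := by group
      _ = ((B * A) ^ k)⁻¹ * ((B * A) ^ k * B) * B⁻¹ := by rw [key]
      _ = 1 := by group
  exact (QuotientGroup.eq_one_iff _).mp hgoal
end

section
/- Let G be a finite group of order 2^k·n with n odd, and let P be a subgroup of G of order 2^(k−1). Let x, y ∈ G be such that ⟨P, x⟩ and ⟨P, y⟩ are Sylow 2-subgroups of G. Then the order of x·y is a power of 2 if and only if ⟨P, x⟩ = ⟨P, y⟩. Moreover, if the order of x·y equals 2^t·(2s+1) for natural numbers t and s, then conjugation by (y·x)^s carries ⟨P, x⟩ to ⟨P, y⟩, i.e. ((y·x)^s)⁻¹·⟨P, x⟩·(y·x)^s = ⟨P, y⟩. -/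
open Subgroup

/-- Let `G` be a finite group of order `2^k * n` with `n` odd, and `P ≤ G` of order `2^(k-1)`.
If `⟨P, x⟩` and `⟨P, y⟩` are Sylow 2-subgroups of `G` (i.e. have order `2^k`), then `x*y` has
2-power order iff `⟨P, x⟩ = ⟨P, y⟩`; and if `|x*y| = 2^t * (2s+1)` then `(y*x)^s` conjugates
`⟨P, x⟩` to `⟨P, y⟩`. -/
theorem index_two_sylow {G : Type*} [Group G] [Fintype G] (k n : ℕ) (hn : Odd n)
    (hcard : Fintype.card G = 2 ^ k * n)
    (P : Subgroup G) (hP : Nat.card P = 2 ^ (k - 1))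
    (x y : G)
    (hx : Nat.card ↥(P ⊔ Subgroup.zpowers x) = 2 ^ k)
    (hy : Nat.card ↥(P ⊔ Subgroup.zpowers y) = 2 ^ k) :
    ((∃ t : ℕ, orderOf (x * y) = 2 ^ t) ↔
        P ⊔ Subgroup.zpowers x = P ⊔ Subgroup.zpowers y) ∧
    ∀ t s : ℕ, orderOf (x * y) = 2 ^ t * (2 * s + 1) →
      (P ⊔ Subgroup.zpowers x).map (MulAut.conj (((y * x) ^ s)⁻¹)).toMonoidHom =
        P ⊔ Subgroup.zpowers y := by
  rcases Nat.eq_zero_or_pos k with hk0 | hk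
  · -- degenerate case `k = 0`
    subst hk0
    rw [pow_zero] at hx hy
    have hA : P ⊔ zpowers x = ⊥ := Subgroup.card_eq_one.mp hx
    have hB : P ⊔ zpowers y = ⊥ := Subgroup.card_eq_one.mp hy
    have hx1 : x = 1 := by
      have : x ∈ P ⊔ zpowers x := Subgroup.mem_sup_right (mem_zpowers x)
      rwa [hA, Subgroup.mem_bot] at this
    have hy1 : y = 1 := by
      have : y ∈ P ⊔ zpowers y := Subgroup.mem_sup_right (mem_zpowers y)
      rwa [hB, Subgroup.mem_bot] at this
    subst hx1; subst hy1
    constructor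
    · exact ⟨fun _ => hA.trans hB.symm, fun _ => ⟨0, by simp⟩⟩
    · intro t s hts
      simp only [one_mul, orderOf_one] at hts
      have hs : s = 0 := by
        have h2 : (2 * s + 1) ∣ 1 := Dvd.intro_left _ hts.symm
        have h3 := Nat.le_of_dvd one_pos h2
        omega
      subst hs
      simp only [pow_zero, inv_one, map_one]
      rw [hA]
      exact Subgroup.map_bot _
  · -- main case `k ≥ 1`
    have key : ∀ z : G, Nat.card ↥(P ⊔ zpowers z) = 2 ^ k →
        z ∈ (normalizer (P : Set G)) ∧ z ∉ P ∧ z * z ∈ P := by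
      intro z hz
      have hPC : P ≤ P ⊔ zpowers z := le_sup_left
      have hzC : z ∈ P ⊔ zpowers z := Subgroup.mem_sup_right (mem_zpowers z)
      have hcardP' : Nat.card (P.subgroupOf (P ⊔ zpowers z)) = 2 ^ (k - 1) := by
        rw [Nat.card_congr (Subgroup.subgroupOfEquivOfLe hPC).toEquiv]; exact hP
      have hidx : (P.subgroupOf (P ⊔ zpowers z)).index = 2 := by
        have h1 : (P.subgroupOf (P ⊔ zpowers z)).index * 2 ^ (k - 1) = 2 ^ k := by
          rw [← hcardP', Subgroup.index_mul_card, hz]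
        have h2 : 2 * 2 ^ (k - 1) = 2 ^ k := by
          rw [← pow_succ']
          congr 1
          omega
        exact Nat.eq_of_mul_eq_mul_right (Nat.pow_pos (by norm_num))
          (h1.trans h2.symm)
      have hconj : ∀ w ∈ P ⊔ zpowers z, ∀ p ∈ P, w * p * w⁻¹ ∈ P := by
        intro w hw p hp
        have hpH : (⟨p, hPC hp⟩ : ↥(P ⊔ zpowers z)) ∈ P.subgroupOf (P ⊔ zpowers z) := hp
        have h1 : (⟨w, hw⟩ * ⟨p, hPC hp⟩ * (⟨w, hw⟩ : ↥(P ⊔ zpowers z))⁻¹)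
            ∈ P.subgroupOf (P ⊔ zpowers z) := by
          rw [Subgroup.mul_mem_iff_of_index_two hidx,
            Subgroup.mul_mem_iff_of_index_two hidx]
          simp [hpH]
        simpa [Subgroup.mem_subgroupOf] using h1
      have hzN : z ∈ (normalizer (P : Set G)) := by
        rw [Subgroup.mem_normalizer_iff]
        intro h
        constructor
        · intro hh; exact hconj z hzC h hh
        · intro hh
          have hmem : z * h * z⁻¹ ∈ P ⊔ zpowers z := hPC hh
          have h2 := hconj z⁻¹ (inv_mem hzC) _ hh
          simpa [mul_assoc] using h2
      refine ⟨hzN, ?_, ?_⟩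
      · intro hzP
        have hCP : P ⊔ zpowers z = P := sup_eq_left.mpr (zpowers_le.mpr hzP)
        rw [hCP, hP] at hz
        have : (2:ℕ) ^ (k - 1) < 2 ^ k := Nat.pow_lt_pow_right (by norm_num) (by omega)
        omega
      · have h1 := Subgroup.mul_self_mem_of_index_two hidx (⟨z, hzC⟩ : ↥(P ⊔ zpowers z))
        simpa [Subgroup.mem_subgroupOf] using h1
    obtain ⟨hxN, hxP, hx2⟩ := key x hx
    obtain ⟨hyN, hyP, hy2⟩ := key y hy
    have hPN : P ≤ (normalizer (P : Set G)) := Subgroup.le_normalizer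
    set N := (normalizer (P : Set G)) with hN
    set P' : Subgroup ↥N := P.subgroupOf N with hP'def
    haveI : P'.Normal := Subgroup.normal_in_normalizer
    set π : ↥N →* ↥N ⧸ P' := QuotientGroup.mk' P' with hπ
    set x' : ↥N := ⟨x, hxN⟩ with hx'def
    set y' : ↥N := ⟨y, hyN⟩ with hy'def
    set a := π x' with ha_def
    set b := π y' with hb_def
    -- counting lemma
    have hcount : ∀ S : Subgroup (↥N ⧸ P'), ∀ j : ℕ, Nat.card S = 2 ^ j → j ≤ 1 := by
      intro S j hS
      have hset : ((S.comap π : Subgroup ↥N) : Set ↥N)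
          = QuotientGroup.mk ⁻¹' (S : Set (↥N ⧸ P')) := by
        rw [Subgroup.coe_comap, hπ]
        rfl
      have h1 : Nat.card (S.comap π) = 2 ^ (k - 1) * 2 ^ j := by
        calc Nat.card (S.comap π)
            = Nat.card (QuotientGroup.mk ⁻¹' (S : Set (↥N ⧸ P'))) :=
              Nat.card_congr (Equiv.setCongr hset)
          _ = Nat.card P' * Nat.card S := QuotientGroup.card_preimage_mk _ _
          _ = 2 ^ (k - 1) * 2 ^ j := by
              rw [hS, hP'def, Nat.card_congr (Subgroup.subgroupOfEquivOfLe hPN).toEquiv, hP]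
      have h2 : Nat.card (S.comap π) ∣ 2 ^ k * n := by
        calc Nat.card (S.comap π) ∣ Nat.card ↥N := Subgroup.card_subgroup_dvd_card _
          _ ∣ Nat.card G := Subgroup.card_subgroup_dvd_card _
          _ = 2 ^ k * n := by rw [Nat.card_eq_fintype_card, hcard]
      rw [h1, ← pow_add] at h2
      have h3 : (2:ℕ) ^ (k - 1 + j) ∣ 2 ^ k :=
        (Nat.Coprime.dvd_of_dvd_mul_right ((Nat.coprime_two_left.mpr hn).pow_left _) h2)
      have h4 : k - 1 + j ≤ k := (Nat.pow_dvd_pow_iff_le_right (by norm_num)).mp h3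
      omega
    have hmem1 : ∀ z : ↥N, π z = 1 ↔ (z : G) ∈ P := by
      intro z
      rw [hπ, QuotientGroup.mk'_apply, QuotientGroup.eq_one_iff]
      exact Subgroup.mem_subgroupOf
    have ha2 : a ^ 2 = 1 := by
      rw [ha_def, ← map_pow, hmem1]
      simpa [pow_two] using hx2
    have hb2 : b ^ 2 = 1 := by
      rw [hb_def, ← map_pow, hmem1]
      simpa [pow_two] using hy2
    have ha1 : a ≠ 1 := by
      rw [ha_def, Ne, hmem1]
      exact hxP
    have hb1 : b ≠ 1 := by
      rw [hb_def, Ne, hmem1]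
      exact hyP
    have haa : a * a = 1 := by rw [← pow_two]; exact ha2
    have hbb : b * b = 1 := by rw [← pow_two]; exact hb2
    have hainv : a⁻¹ = a := by rw [inv_eq_iff_mul_eq_one]; exact haa
    have hbinv : b⁻¹ = b := by rw [inv_eq_iff_mul_eq_one]; exact hbb
    have hrel : (MulAut.conj a) (a * b) = (a * b)⁻¹ := by
      rw [MulAut.conj_apply, mul_inv_rev, hainv, hbinv, ← mul_assoc, haa, one_mul]
    have hrelz : ∀ i : ℤ, a * (a * b) ^ i * a⁻¹ = ((a * b) ^ i)⁻¹ := by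
      intro i
      calc a * (a * b) ^ i * a⁻¹ = (MulAut.conj a) ((a * b) ^ i) := by
            rw [MulAut.conj_apply]
        _ = ((MulAut.conj a) (a * b)) ^ i := map_zpow _ _ i
        _ = ((a * b)⁻¹) ^ i := by rw [hrel]
        _ = ((a * b) ^ i)⁻¹ := by rw [inv_zpow]
    have horderc : orderOf (x' * y') = orderOf (x * y) := by
      have := (Subgroup.orderOf_coe (x' * y')).symm
      simpa using this
    -- the main conjugation statement
    have main : ∀ t s : ℕ, orderOf (x * y) = 2 ^ t * (2 * s + 1) →
        (P ⊔ zpowers x).map (MulAut.conj (((y * x) ^ s)⁻¹)).toMonoidHom =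
          P ⊔ zpowers y := by
      intro t s hts
      have hcord : orderOf (a * b) ∣ 2 ^ t * (2 * s + 1) := by
        rw [← hts, ← horderc]
        have h0 : a * b = π (x' * y') := by rw [map_mul]
        rw [h0]
        exact orderOf_map_dvd π (x' * y')
      have hu : orderOf ((a * b) ^ (2 * s + 1)) ∣ 2 ^ t := by
        apply orderOf_dvd_of_pow_eq_one
        rw [← pow_mul, mul_comm (2 * s + 1)]
        exact orderOf_dvd_iff_pow_eq_one.mp hcord
      obtain ⟨u, hu_def⟩ : ∃ u, u = (a * b) ^ (2 * s + 1) := ⟨_, rfl⟩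
      rw [← hu_def] at hu
      obtain ⟨j, hjt, hj⟩ := (Nat.dvd_prime_pow Nat.prime_two).mp hu
      -- key claim: (a*b)^(2s+1) = 1
      have hum : (a * b) ^ (2 * s + 1) = 1 := by
        rw [← hu_def]
        by_contra hne
        have hSu2 : IsPGroup 2 (zpowers u) :=
          IsPGroup.of_card (by rw [Nat.card_zpowers, hj])
        have hSa : IsPGroup 2 (zpowers a) := by
          have hca : Nat.card (zpowers a) = 2 ^ 1 := by
            rw [Nat.card_zpowers, orderOf_eq_prime ha2 ha1, pow_one]
          exact IsPGroup.of_card hca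
        have hconju : ∀ i : ℤ, a * u ^ i * a⁻¹ = u ^ (-i) := by
          intro i
          have h1 : ∀ j : ℤ, u ^ j = (a * b) ^ (((2 * s + 1) : ℕ) * j) := fun j => by
            rw [hu_def, zpow_mul, zpow_natCast]
          rw [h1 i, hrelz, h1 (-i), mul_neg, zpow_neg]
        have hconju' : ∀ i : ℤ, a⁻¹ * u ^ i * a = u ^ (-i) := by
          intro i
          have := hconju i
          rw [hainv] at this ⊢
          exact this
        have hnormS : zpowers a ≤ normalizer ((zpowers u : Subgroup (↥N ⧸ P')) : Set (↥N ⧸ P')) := by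
          rw [Subgroup.zpowers_le, Subgroup.mem_normalizer_iff]
          intro h
          constructor
          · rintro ⟨i, rfl⟩
            exact ⟨-i, (hconju i).symm⟩
          · rintro ⟨i, hi⟩
            refine ⟨-i, ?_⟩
            have hi'' : u ^ i = a * h * a⁻¹ := hi
            show u ^ (-i) = h
            rw [← hconju' i, hi'']
            group
        have hS : IsPGroup 2 ((zpowers a ⊔ zpowers u : Subgroup (↥N ⧸ P'))) :=
          IsPGroup.to_sup_of_normal_right' hSa hSu2 hnormS
        obtain ⟨j', hj'⟩ := IsPGroup.iff_card.mp hS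
        have hj'1 : j' ≤ 1 := hcount _ _ hj'
        have hcard_a : Nat.card (zpowers a) = 2 := by
          rw [Nat.card_zpowers, orderOf_eq_prime ha2 ha1]
        have hcard_le : Nat.card ((zpowers a ⊔ zpowers u : Subgroup (↥N ⧸ P'))) ≤ 2 := by
          rw [hj']
          calc (2:ℕ) ^ j' ≤ 2 ^ 1 := Nat.pow_le_pow_right (by norm_num) hj'1
            _ = 2 := rfl
        have heq : zpowers a = zpowers a ⊔ zpowers u := by
          apply Subgroup.eq_of_le_of_card_ge le_sup_left
          rw [hcard_a]
          exact hcard_le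
        have humem : u ∈ zpowers a := by
          rw [heq]
          exact Subgroup.mem_sup_right (mem_zpowers u)
        obtain ⟨i, hi⟩ := humem
        have hi' : a ^ i = u := hi
        have hau : u = a := by
          rcases Int.even_or_odd i with ⟨i2, hi2⟩ | ⟨i2, hi2⟩
          · exfalso
            apply hne
            rw [← hi', hi2, ← two_mul, zpow_mul,
              show ((2:ℤ)) = ((2:ℕ):ℤ) by norm_num, zpow_natCast, ha2, one_zpow]
          · rw [← hi', hi2, zpow_add, zpow_mul,
              show ((2:ℤ)) = ((2:ℕ):ℤ) by norm_num, zpow_natCast, ha2, one_zpow,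
              one_mul, zpow_one]
        have hcomm : (a * b) * u = u * (a * b) := by
          rw [hu_def, ← pow_succ', ← pow_succ]
        have h1 : (a * b)⁻¹ = a * b := by
          calc (a * b)⁻¹ = a * (a * b) * a⁻¹ := by rw [← hrel, MulAut.conj_apply]
            _ = u * (a * b) * u⁻¹ := by rw [hau]
            _ = (a * b) * u * u⁻¹ := by rw [← hcomm]
            _ = a * b := by rw [mul_inv_cancel_right]
        have h2 : (a * b) * (a * b) = 1 := by
          nth_rewrite 2 [← h1]
          group
        have h3 : u = a * b := by
          rw [hu_def, pow_succ, pow_mul, pow_two, h2, one_pow, one_mul]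
        apply hb1
        have h4 : a * 1 = a * b := by
          rw [mul_one, ← h3, ← hau]
        exact (mul_left_cancel h4).symm
      -- now the conjugation computation
      have hc2s : (a * b) ^ (2 * s) = (a * b)⁻¹ := by
        have h5 : (a * b) ^ (2 * s) * (a * b) = 1 := by
          rw [← pow_succ]
          exact hum
        exact eq_inv_of_mul_eq_one_left h5
      set g0' : ↥N := (y' * x') ^ s with hg0'def
      have hba : b * a = (a * b)⁻¹ := by rw [mul_inv_rev, hainv, hbinv]
      have hπg : π g0' = ((a * b) ^ s)⁻¹ := by
        rw [hg0'def, map_pow, map_mul, ← hb_def, ← ha_def, hba, inv_pow]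
      have hthis : a * (a * b) ^ s * a = ((a * b) ^ s)⁻¹ := by
        have h6 := hrelz (s : ℤ)
        rw [zpow_natCast, hainv] at h6
        exact h6
      have h6 : (a * b) ^ s * a = a * ((a * b) ^ s)⁻¹ := by
        calc (a * b) ^ s * a = (a * a) * ((a * b) ^ s * a) := by rw [haa, one_mul]
          _ = a * (a * (a * b) ^ s * a) := by group
          _ = a * ((a * b) ^ s)⁻¹ := by rw [hthis]
      have hw : π (g0'⁻¹ * x' * g0') = b := by
        rw [map_mul, map_mul, map_inv, hπg, ← ha_def, inv_inv]
        calc (a * b) ^ s * a * ((a * b) ^ s)⁻¹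
            = a * ((a * b) ^ s)⁻¹ * ((a * b) ^ s)⁻¹ := by rw [h6]
          _ = a * ((a * b) ^ s * (a * b) ^ s)⁻¹ := by rw [mul_assoc, ← mul_inv_rev]
          _ = a * ((a * b) ^ (2 * s))⁻¹ := by rw [← pow_add, two_mul]
          _ = a * (a * b) := by rw [hc2s, inv_inv]
          _ = b := by rw [← mul_assoc, haa, one_mul]
      rw [hb_def] at hw
      have h8 : (g0'⁻¹ * x' * g0')⁻¹ * y' ∈ P' := by
        rw [hπ, QuotientGroup.mk'_apply, QuotientGroup.mk'_apply] at hw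
        exact (QuotientGroup.eq).mp hw
      have hwy : (((y * x) ^ s)⁻¹ * x * (y * x) ^ s)⁻¹ * y ∈ P := by
        rw [Subgroup.mem_subgroupOf] at h8
        simpa [hg0'def, hx'def, hy'def] using h8
      -- conjugation of P by elements of the normalizer
      have hmapP : ∀ g ∈ (normalizer (P : Set G)), P.map (MulAut.conj g).toMonoidHom = P := by
        intro g hg
        ext z
        simp only [Subgroup.mem_map, MulEquiv.coe_toMonoidHom, MulAut.conj_apply]
        constructor
        · rintro ⟨p, hp, rfl⟩
          exact (Subgroup.mem_normalizer_iff.mp hg p).mp hp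
        · intro hz
          refine ⟨g⁻¹ * z * g, (Subgroup.mem_normalizer_iff''.mp hg z).mp hz, by group⟩
      have hg0N : ((y * x) ^ s)⁻¹ ∈ (normalizer (P : Set G)) := inv_mem (pow_mem (mul_mem hyN hxN) s)
      rw [Subgroup.map_sup, hmapP _ hg0N, MonoidHom.map_zpowers]
      have hconjx : (MulAut.conj (((y * x) ^ s)⁻¹)).toMonoidHom x
          = ((y * x) ^ s)⁻¹ * x * (y * x) ^ s := by
        show ((y * x) ^ s)⁻¹ * x * (((y * x) ^ s)⁻¹)⁻¹ = _
        rw [inv_inv]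
      rw [hconjx]
      apply le_antisymm
      · apply sup_le le_sup_left
        rw [Subgroup.zpowers_le]
        have hmm : y * ((((y * x) ^ s)⁻¹ * x * (y * x) ^ s)⁻¹ * y)⁻¹ ∈ P ⊔ zpowers y :=
          mul_mem (Subgroup.mem_sup_right (mem_zpowers y))
            (Subgroup.mem_sup_left (inv_mem hwy))
        simpa only [mul_inv_rev, inv_inv, mul_inv_cancel_left] using hmm
      · apply sup_le le_sup_left
        rw [Subgroup.zpowers_le]
        have hmm : (((y * x) ^ s)⁻¹ * x * (y * x) ^ s)
            * ((((y * x) ^ s)⁻¹ * x * (y * x) ^ s)⁻¹ * y)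
            ∈ P ⊔ zpowers (((y * x) ^ s)⁻¹ * x * (y * x) ^ s) :=
          mul_mem (Subgroup.mem_sup_right (mem_zpowers _))
            (Subgroup.mem_sup_left hwy)
        simpa only [mul_inv_cancel_left] using hmm
    refine ⟨⟨?_, ?_⟩, main⟩
    · rintro ⟨t, ht⟩
      have h9 := main t 0 (by rw [ht]; norm_num)
      rw [pow_zero, inv_one, map_one] at h9
      rwa [show ((1 : MulAut G).toMonoidHom) = MonoidHom.id G from rfl,
        Subgroup.map_id] at h9
    · intro hAB
      have hmem : x * y ∈ P ⊔ zpowers x :=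
        mul_mem (Subgroup.mem_sup_right (mem_zpowers x))
          (hAB ▸ Subgroup.mem_sup_right (mem_zpowers y))
      have hdvd : orderOf (x * y) ∣ 2 ^ k := by
        rw [← hx]
        have h10 := orderOf_dvd_natCard (⟨x * y, hmem⟩ : ↥(P ⊔ zpowers x))
        rwa [Subgroup.orderOf_mk] at h10
      obtain ⟨t, _, ht⟩ := (Nat.dvd_prime_pow Nat.prime_two).mp hdvd
      exact ⟨t, ht⟩
end

section
/- Let F be a finite field, let d be an odd natural number, let V be a d-dimensional vector space over F, and let f : V × V → F be a non-degenerate bilinear form. If g : V → V is an F-linear map with det(g) = 1 that preserves f, i.e. f(g v, g w) = f(v, w) for all v, w ∈ V, then g has 1 as an eigenvalue: there exists a nonzero vector v ∈ V with g v = v. -/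
open Polynomial Matrix

private lemma charpoly_transpose_eq {n : ℕ} {R : Type*} [CommRing R]
    (M : Matrix (Fin n) (Fin n) R) : Mᵀ.charpoly = M.charpoly := by
  unfold Matrix.charpoly
  have : charmatrix Mᵀ = (charmatrix M)ᵀ := by
    ext i j
    rcases eq_or_ne i j with rfl | h
    · simp [charmatrix_apply_eq]
    · simp [charmatrix_apply_ne _ _ _ h, charmatrix_apply_ne _ _ _ (Ne.symm h)]
  rw [this, det_transpose]

private lemma charpoly_conj_eq {n : ℕ} {R : Type*} [Field R] (P B : Matrix (Fin n) (Fin n) R)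
    (hP : IsUnit P.det) : (P⁻¹ * B * P).charpoly = B.charpoly := by
  have hPC : (P.map (C : R →+* R[X])).det ≠ 0 := by
    rw [← RingHom.mapMatrix_apply, ← RingHom.map_det]
    simpa using fun h => by simp [h] at hP
  have key : P.map (C : R →+* R[X]) * charmatrix (P⁻¹ * B * P)
      = charmatrix B * P.map (C : R →+* R[X]) := by
    unfold charmatrix
    rw [Matrix.mul_sub, Matrix.sub_mul]
    congr 1
    · exact (scalar_commute X (fun r => Commute.all _ _) _).symm
    · rw [← RingHom.mapMatrix_apply, ← _root_.map_mul, ← _root_.map_mul,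
        show P * (P⁻¹ * B * P) = B * P from by
        rw [← Matrix.mul_assoc, ← Matrix.mul_assoc, Matrix.mul_nonsing_inv P hP, Matrix.one_mul]]
  have := congrArg Matrix.det key
  rw [det_mul, det_mul] at this
  unfold Matrix.charpoly
  exact mul_left_cancel₀ hPC (by rw [this]; ring)

/-- key charpolyRev computation: if det M = 1 and the dimension is odd, then
`charpolyRev M⁻¹ = - charpoly M`. -/
private lemma charpolyRev_inv_eq {n : ℕ} (hn : Odd n) {R : Type*} [Field R]
    (M : Matrix (Fin n) (Fin n) R) (hM : M.det = 1) :
    (M⁻¹).charpolyRev = - M.charpoly := by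
  have hMu : IsUnit M.det := by rw [hM]; exact isUnit_one
  have h1 : (1 : Matrix (Fin n) (Fin n) R[X]) - (X : R[X]) • (M⁻¹).map C
      = (M⁻¹).map (C : R →+* R[X]) * (M.map C - (X : R[X]) • 1) := by
    rw [Matrix.mul_sub, ← RingHom.mapMatrix_apply, ← RingHom.mapMatrix_apply,
      ← _root_.map_mul, Matrix.nonsing_inv_mul M hMu, Matrix.mul_smul, Matrix.mul_one]
    simp
  have hdetinv : (M⁻¹).det = 1 := by
    rw [Matrix.det_nonsing_inv, hM]; simp
  have h2 : (M.map (C : R →+* R[X]) - (X : R[X]) • 1).det = - M.charpoly := by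
    have : M.map (C : R →+* R[X]) - (X : R[X]) • 1 = -charmatrix M := by
      unfold charmatrix
      rw [neg_sub, scalar_apply, ← smul_one_eq_diagonal, RingHom.mapMatrix_apply]
    rw [this, Matrix.det_neg, Matrix.charpoly]
    simp [hn.neg_one_pow]
  rw [Matrix.charpolyRev, h1, det_mul, h2, ← RingHom.mapMatrix_apply, ← RingHom.map_det,
    hdetinv]
  simp

/-- Let `F` be a finite field, `V` a `d`-dimensional `F`-vector space with `d` odd, and
`f` a non-degenerate bilinear form on `V`. Any `F`-linear `g : V → V` of determinant 1
preserving `f` has `1` as an eigenvalue. -/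
theorem one_is_eigenvalue {F V : Type*} [Field F] [Finite F] [AddCommGroup V] [Module F V]
    [FiniteDimensional F V] (d : ℕ) (hd : Odd d) (hdim : Module.finrank F V = d)
    (f : LinearMap.BilinForm F V) (hf : f.Nondegenerate)
    (g : V →ₗ[F] V) (hdet : LinearMap.det g = 1)
    (hpres : ∀ v w : V, f (g v) (g w) = f v w) :
    ∃ v : V, v ≠ 0 ∧ g v = v := by
  classical
  let b : Module.Basis (Fin d) F V := Module.finBasisOfFinrankEq F V hdim
  set M : Matrix (Fin d) (Fin d) F := LinearMap.toMatrix b b g with hMdef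
  set A : Matrix (Fin d) (Fin d) F := LinearMap.BilinForm.toMatrix b f with hAdef
  have hAdet : A.det ≠ 0 := (LinearMap.BilinForm.nondegenerate_iff_det_ne_zero b).mp hf
  have hAu : IsUnit A.det := isUnit_iff_ne_zero.mpr hAdet
  have hMdet : M.det = 1 := by rw [hMdef, LinearMap.det_toMatrix, hdet]
  have hMu : IsUnit M.det := by rw [hMdet]; exact isUnit_one
  -- the isometry condition in matrix form
  have hcomp : f.comp g g = f := by
    ext v w
    exact hpres v w
  have hMAM : Mᵀ * A * M = A := by
    have := LinearMap.BilinForm.toMatrix_comp b b f g g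
    rw [hcomp] at this
    rw [hMdef, hAdef, ← this]
  -- M⁻¹ = A⁻¹ * Mᵀ * A
  have hMinv : M⁻¹ = A⁻¹ * Mᵀ * A := by
    have h1 : A * M⁻¹ = Mᵀ * A := by
      have := congrArg (· * M⁻¹) hMAM
      simpa [Matrix.mul_assoc, Matrix.mul_nonsing_inv M hMu] using this.symm
    calc M⁻¹ = A⁻¹ * (A * M⁻¹) := by
          rw [← Matrix.mul_assoc, Matrix.nonsing_inv_mul A hAu, Matrix.one_mul]
      _ = A⁻¹ * Mᵀ * A := by rw [h1, Matrix.mul_assoc]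
  -- charpoly of M⁻¹ equals charpoly of M
  have hcp : (M⁻¹).charpoly = M.charpoly := by
    rw [hMinv, charpoly_conj_eq A Mᵀ hAu, charpoly_transpose_eq]
  -- the reversal identity
  have hrev : M.charpoly.reverse = - M.charpoly := by
    rw [← hcp, Matrix.reverse_charpoly, charpolyRev_inv_eq hd M hMdet, hcp]
  set p : F[X] := M.charpoly with hpdef
  have hdeg : p.natDegree = d := by
    rw [hpdef, Matrix.charpoly_natDegree_eq_dim]; simp
  have hcoeff : ∀ i ≤ d, p.coeff (d - i) = - p.coeff i := by
    intro i hi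
    have := congrArg (fun q => Polynomial.coeff q i) hrev
    simp only [Polynomial.coeff_reverse, hdeg, Polynomial.revAt_le hi,
      Polynomial.coeff_neg] at this
    exact this
  -- evaluate at 1
  have heval : p.eval 1 = 0 := by
    rw [Polynomial.eval_eq_sum_range, hdeg]
    have : ∀ i ∈ Finset.range (d + 1), p.coeff i * 1 ^ i = p.coeff i := by
      intro i _; simp
    rw [Finset.sum_congr rfl this]
    obtain ⟨k, hk⟩ := hd
    refine Finset.sum_involution (fun i _ => d - i) ?_ ?_ ?_ ?_
    · intro i hi
      rw [hcoeff i (Nat.lt_succ_iff.mp (Finset.mem_range.mp hi))]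
      ring
    · intro i hi _
      have hile : i ≤ d := Nat.lt_succ_iff.mp (Finset.mem_range.mp hi)
      omega
    · intro i hi
      simp only [Finset.mem_range] at hi ⊢
      omega
    · intro i hi
      have hile : i ≤ d := Nat.lt_succ_iff.mp (Finset.mem_range.mp hi)
      omega
  -- hence det (1 - M) = 0
  have hdet1M : (1 - M).det = 0 := by
    have h1 : M.charpolyRev = p.reverse := (Matrix.reverse_charpoly M).symm
    have h2 : M.charpolyRev.eval 1 = (1 - M).det := by
      rw [Matrix.charpolyRev, ← Polynomial.coe_evalRingHom, RingHom.map_det]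
      congr 1
      ext i j
      rcases eq_or_ne i j with rfl | h
      · simp [Matrix.one_apply]
      · simp [Matrix.one_apply, h]
    rw [← h2, h1, hrev]
    simp [heval]
  -- translate back to linear maps
  have hdetlin : LinearMap.det (LinearMap.id - g : V →ₗ[F] V) = 0 := by
    rw [← LinearMap.det_toMatrix b]
    have : LinearMap.toMatrix b b (LinearMap.id - g : V →ₗ[F] V) = 1 - M := by
      rw [map_sub, LinearMap.toMatrix_id, hMdef]
    rw [this, hdet1M]
  have hker := LinearMap.bot_lt_ker_of_det_eq_zero hdetlin
  obtain ⟨v, hvmem, hvne⟩ := (Submodule.ne_bot_iff _).mp hker.ne'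
  refine ⟨v, hvne, ?_⟩
  have := LinearMap.mem_ker.mp hvmem
  simp only [LinearMap.sub_apply, LinearMap.id_apply, sub_eq_zero] at this
  exact this.symm
end

section
/- Let F be a finite field with q elements and let V be a vector space over F. Let O be a set of 1-dimensional subspaces of V such that every 2-dimensional subspace of V contains at most 2 members of O. Then every 3-dimensional subspace of V contains at most q+2 members of O. -/
set_option linter.unusedSectionVars false

open Module Set

namespace AuxOvoid

variable {F V : Type*} [Field F] [Fintype F] [AddCommGroup V] [Module F V]

/-- All submodules contained in a (set-)finite submodule form a finite set. -/
lemma finLe_aux (L : Submodule F V) (hL : (L : Set V).Finite) :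
    {Q : Submodule F V | Q ≤ L}.Finite := by
  have himg : ((fun Q : Submodule F V => (Q : Set V)) '' {Q | Q ≤ L}).Finite :=
    hL.finite_subsets.subset (by rintro s ⟨Q, hQ, rfl⟩; exact hQ)
  exact himg.of_finite_image (fun a _ b _ h => SetLike.coe_injective h)

lemma ncard_coe_submodule (L : Submodule F V) (h : 0 < finrank F L) :
    (L : Set V).ncard = Fintype.card F ^ finrank F L := by
  classical
  haveI : Module.Finite F L := Module.finite_of_finrank_pos h
  haveI : Finite L := Module.finite_of_finite F
  haveI : Fintype L := Fintype.ofFinite _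
  have : Nat.card L = Fintype.card F ^ finrank F L := by
    rw [Nat.card_eq_fintype_card]; exact Module.card_eq_pow_finrank
  rw [← Nat.card_coe_set_eq]
  exact this

lemma line_count (W P₀ : Submodule F V) (hWfin : (W : Set V).Finite)
    (hW : finrank F W = 3) (hP₀ : finrank F P₀ = 1) (hP₀W : P₀ ≤ W)
    (Ls : Set (Submodule F V))
    (hLs : ∀ L ∈ Ls, P₀ ≤ L ∧ L ≤ W ∧ finrank F L = 2) :
    Ls.ncard ≤ Fintype.card F + 1 := by
  classical
  set q := Fintype.card F with hq
  have hq2 : 2 ≤ q := Fintype.one_lt_card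
  have hLsfin : Ls.Finite := (finLe_aux W hWfin).subset (fun L hL => (hLs L hL).2.1)
  set t : Finset (Submodule F V) := hLsfin.toFinset with ht
  -- the pointsets of the lines, minus the common point P₀
  have finA : ∀ L : Submodule F V, (((L : Set V) ∩ (W : Set V)) \ (P₀ : Set V)).Finite :=
    fun L => hWfin.subset (fun x hx => hx.1.2)
  set f : Submodule F V → Finset V := fun L => (finA L).toFinset with hf
  -- each line contributes q^2 - q points
  have hcard : ∀ L ∈ t, (f L).card = q ^ 2 - q := by
    intro L hLt
    have hL := hLs L (hLsfin.mem_toFinset.mp hLt)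
    have hsub : (P₀ : Set V) ⊆ (L : Set V) := SetLike.coe_subset_coe.mpr hL.1
    have hA : ((L : Set V) ∩ (W : Set V)) \ (P₀ : Set V) = (L : Set V) \ (P₀ : Set V) := by
      rw [Set.inter_eq_left.mpr (SetLike.coe_subset_coe.mpr hL.2.1)]
    have : (f L).card = (((L : Set V) ∩ (W : Set V)) \ (P₀ : Set V)).ncard :=
      (Set.ncard_eq_toFinset_card _ (finA L)).symm
    rw [this, hA, Set.ncard_diff hsub (hWfin.subset (hsub.trans (SetLike.coe_subset_coe.mpr hL.2.1)))]
    rw [ncard_coe_submodule L (by omega), ncard_coe_submodule P₀ (by omega), hL.2.2, hP₀]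
    ring_nf
    rfl
  -- the lines are pairwise disjoint away from P₀
  have hdisj : ∀ L ∈ t, ∀ L' ∈ t, L ≠ L' → Disjoint (f L) (f L') := by
    intro L hLt L' hL't hne
    have hL := hLs L (hLsfin.mem_toFinset.mp hLt)
    have hL' := hLs L' (hLsfin.mem_toFinset.mp hL't)
    haveI : FiniteDimensional F L := Module.finite_of_finrank_pos (by omega)
    haveI : FiniteDimensional F L' := Module.finite_of_finrank_pos (by omega)
    haveI : FiniteDimensional F (L ⊓ L' : Submodule F V) :=
      Submodule.finiteDimensional_of_le (inf_le_left (b := L'))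
    rw [Finset.disjoint_left]
    intro x hx hx'
    rw [hf, Set.Finite.mem_toFinset] at hx hx'
    have hxL : x ∈ L := hx.1.1
    have hxL' : x ∈ L' := hx'.1.1
    have hxP : x ∉ P₀ := hx.2
    have hx0 : x ≠ 0 := fun h => hxP (h ▸ P₀.zero_mem)
    -- the span of x together with P₀ is 2-dimensional
    have hinf : (F ∙ x) ⊓ P₀ = ⊥ := by
      rw [← disjoint_iff, disjoint_comm]
      exact (Submodule.disjoint_span_singleton' hx0).mpr hxP
    have hM2 : finrank F ((F ∙ x) ⊔ P₀ : Submodule F V) = 2 := by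
      haveI : FiniteDimensional F (F ∙ x : Submodule F V) := Module.finite_of_finrank_pos
        (by rw [finrank_span_singleton hx0]; omega)
      haveI : FiniteDimensional F P₀ := Module.finite_of_finrank_pos (by omega)
      have := Submodule.finrank_sup_add_finrank_inf_eq (F ∙ x) P₀
      rw [hinf, finrank_bot, finrank_span_singleton hx0, hP₀] at this
      omega
    have hML : (F ∙ x) ⊔ P₀ ≤ L ⊓ L' := sup_le (le_inf
        ((Submodule.span_singleton_le_iff_mem x L).mpr hxL)
        ((Submodule.span_singleton_le_iff_mem x L').mpr hxL')) (le_inf hL.1 hL'.1)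
    have h2le : 2 ≤ finrank F (L ⊓ L' : Submodule F V) := hM2 ▸ Submodule.finrank_mono hML
    have e1 : L ⊓ L' = L :=
      Submodule.eq_of_le_of_finrank_le inf_le_left (by omega)
    have e2 : L ⊓ L' = L' :=
      Submodule.eq_of_le_of_finrank_le inf_le_right (by omega)
    exact hne (e1 ▸ e2)
  -- counting
  have hsum : (t.biUnion f).card = t.card * (q ^ 2 - q) := by
    rw [Finset.card_biUnion hdisj]
    exact Finset.sum_const_nat hcard
  have hBsub : (P₀ : Set V) ⊆ (W : Set V) := SetLike.coe_subset_coe.mpr hP₀W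
  have hBcard : ((W : Set V) \ (P₀ : Set V)).ncard = q ^ 3 - q := by
    rw [Set.ncard_diff hBsub (hWfin.subset hBsub),
      ncard_coe_submodule W (by omega), ncard_coe_submodule P₀ (by omega), hW, hP₀]
    ring_nf
    rfl
  have hsubset : t.biUnion f ⊆ ((hWfin.diff : ((W : Set V) \ (P₀ : Set V)).Finite).toFinset) := by
    intro x hx
    rw [Finset.mem_biUnion] at hx
    obtain ⟨L, hLt, hxL⟩ := hx
    rw [hf, Set.Finite.mem_toFinset] at hxL
    rw [Set.Finite.mem_toFinset]
    exact ⟨hxL.1.2, hxL.2⟩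
  have htotal : t.card * (q ^ 2 - q) ≤ q ^ 3 - q := by
    rw [← hsum, ← hBcard, Set.ncard_eq_toFinset_card _ (hWfin.diff : ((W : Set V) \ (P₀ : Set V)).Finite)]
    exact Finset.card_le_card hsubset
  have hqq : q ≤ q ^ 2 := by nlinarith
  have hqq' : q ≤ q ^ 3 := by nlinarith
  have hkey : q ^ 3 - q = (q + 1) * (q ^ 2 - q) := by zify [hqq, hqq']; ring
  have hfinal : t.card ≤ q + 1 := by
    have hpos : 0 < q ^ 2 - q := Nat.sub_pos_of_lt (by nlinarith)
    have := htotal.trans_eq hkey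
    exact Nat.le_of_mul_le_mul_right this hpos
  rwa [Set.ncard_eq_toFinset_card _ hLsfin]

end AuxOvoid

open AuxOvoid in
/-- Let `F` be a finite field with `q` elements and `V` an `F`-vector space. If `O` is a set of
1-dimensional subspaces of `V` such that every 2-dimensional subspace contains at most 2 members
of `O`, then every 3-dimensional subspace contains at most `q + 2` members of `O`. -/
theorem ovoid_plane_bound {F V : Type*} [Field F] [Fintype F] [AddCommGroup V] [Module F V]
    (O : Set (Submodule F V)) (hO : ∀ P ∈ O, Module.finrank F P = 1)
    (hline : ∀ L : Submodule F V, Module.finrank F L = 2 → {P ∈ O | P ≤ L}.ncard ≤ 2) :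
    ∀ W : Submodule F V, Module.finrank F W = 3 →
      {P ∈ O | P ≤ W}.ncard ≤ Fintype.card F + 2 := by
  intro W hW
  classical
  haveI : Module.Finite F W := Module.finite_of_finrank_pos (by omega)
  haveI : Finite W := Module.finite_of_finite F
  have hWfin : (W : Set V).Finite := Set.toFinite _
  set S := {P ∈ O | P ≤ W} with hSdef
  have hSfin : S.Finite := (finLe_aux W hWfin).subset fun P hP => hP.2
  rcases S.eq_empty_or_nonempty with hS | ⟨P₀, hP₀S⟩
  · rw [hS, Set.ncard_empty]; omega
  obtain ⟨hP₀O, hP₀W⟩ := hP₀S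
  have h1 : finrank F P₀ = 1 := hO P₀ hP₀O
  haveI : FiniteDimensional F P₀ := Module.finite_of_finrank_pos (by omega)
  -- two distinct members of O intersect trivially
  have hdisjP : ∀ P ∈ O, P ≠ P₀ → P₀ ⊓ P = ⊥ := by
    intro P hPO hne
    haveI : FiniteDimensional F P := Module.finite_of_finrank_pos (by rw [hO P hPO]; omega)
    haveI : FiniteDimensional F (P₀ ⊓ P : Submodule F V) :=
      Submodule.finiteDimensional_of_le (inf_le_left (b := P))
    by_contra hbot
    have hpos : 0 < finrank F (P₀ ⊓ P : Submodule F V) := by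
      rcases Nat.eq_zero_or_pos (finrank F (P₀ ⊓ P : Submodule F V)) with h0 | h0
      · exact absurd (Submodule.finrank_eq_zero.mp h0) hbot
      · exact h0
    have e1 : P₀ ⊓ P = P₀ :=
      Submodule.eq_of_le_of_finrank_le inf_le_left (by omega)
    have e2 : P₀ ⊓ P = P :=
      Submodule.eq_of_le_of_finrank_le inf_le_right (by rw [hO P hPO]; omega)
    exact hne (e2 ▸ e1)
  -- lines through P₀ and another member of O are 2-dimensional
  have hlinedim : ∀ P ∈ O, P ≠ P₀ → finrank F (P₀ ⊔ P : Submodule F V) = 2 := by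
    intro P hPO hne
    haveI : FiniteDimensional F P := Module.finite_of_finrank_pos (by rw [hO P hPO]; omega)
    have := Submodule.finrank_sup_add_finrank_inf_eq P₀ P
    rw [hdisjP P hPO hne, finrank_bot, h1, hO P hPO] at this
    omega
  -- the map P ↦ P₀ ⊔ P is injective on S \ {P₀}
  have huniq : Set.InjOn (fun P => P₀ ⊔ P) (S \ {P₀}) := by
    rintro P ⟨⟨hPO, hPW⟩, hPne⟩ P' ⟨⟨hP'O, hP'W⟩, hP'ne⟩ heq
    simp only [Set.mem_singleton_iff] at hPne hP'ne
    by_contra hne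
    set L := P₀ ⊔ P with hLdef
    have hLW : L ≤ W := sup_le hP₀W hPW
    have hLfin : {Q : Submodule F V | Q ≤ L}.Finite :=
      finLe_aux L (hWfin.subset (SetLike.coe_subset_coe.mpr hLW))
    have hbigfin : {Q ∈ O | Q ≤ L}.Finite := hLfin.subset fun Q hQ => hQ.2
    have hsub : ({P₀, P, P'} : Set (Submodule F V)) ⊆ {Q ∈ O | Q ≤ L} := by
      rintro Q (rfl | rfl | rfl)
      · exact ⟨hP₀O, le_sup_left⟩
      · exact ⟨hPO, le_sup_right⟩
      · have : P₀ ⊔ Q ≤ L := le_of_eq heq.symm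
        exact ⟨hP'O, le_sup_right.trans this⟩
    have h3 : ({P₀, P, P'} : Set (Submodule F V)).ncard = 3 := by
      rw [Set.ncard_insert_of_notMem (by simp [Ne.symm hPne, Ne.symm hP'ne]),
        Set.ncard_insert_of_notMem (by simpa using hne), Set.ncard_singleton]
    have := (h3 ▸ Set.ncard_le_ncard hsub hbigfin).trans (hline L (hlinedim P hPO hPne))
    omega
  -- assemble
  set Ls : Set (Submodule F V) := (fun P => P₀ ⊔ P) '' (S \ {P₀}) with hLsdef
  have hLsprop : ∀ L ∈ Ls, P₀ ≤ L ∧ L ≤ W ∧ finrank F L = 2 := by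
    rintro L ⟨P, ⟨⟨hPO, hPW⟩, hPne⟩, rfl⟩
    simp only [Set.mem_singleton_iff] at hPne
    exact ⟨le_sup_left, sup_le hP₀W hPW, hlinedim P hPO hPne⟩
  have hbound := line_count W P₀ hWfin hW h1 hP₀W Ls hLsprop
  have hScard : S.ncard ≤ 1 + Ls.ncard := by
    have hSsub : S ⊆ insert P₀ (S \ {P₀}) := by
      intro P hP
      by_cases h : P = P₀
      · exact h ▸ Set.mem_insert _ _
      · exact Set.mem_insert_of_mem _ ⟨hP, h⟩
    calc S.ncard ≤ (insert P₀ (S \ {P₀})).ncard :=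
          Set.ncard_le_ncard hSsub (hSfin.diff.insert _)
      _ ≤ (S \ {P₀}).ncard + 1 := Set.ncard_insert_le _ _
      _ = Ls.ncard + 1 := by rw [Set.ncard_image_of_injOn huniq]
      _ = 1 + Ls.ncard := by omega
  omega
end

section
/- Let F be a finite field of odd cardinality in which −1 is not a square. Consider the binary quadratic forms Q₁(v) = v₀·v₁, Q₂(v) = v₀² + v₁², and Q₃(v) = v₀² on F². Then no two of Q₁, Q₂, Q₃ are equivalent under SL(2,F) even up to scalars: for any distinct i, j ∈ {1,2,3} there is no g ∈ SL(2,F) and c ∈ F with Qᵢ(v·g) = c·Qⱼ(v) for all row vectors v ∈ F². -/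
open Matrix

/-- The three binary quadratic forms `v₀ v₁`, `v₀² + v₁²` and `v₀²` on `F²`. -/
def threeQuadForms (F : Type*) [Field F] : Fin 3 → (Fin 2 → F) → F :=
  ![fun v => v 0 * v 1, fun v => v 0 ^ 2 + v 1 ^ 2, fun v => v 0 ^ 2]

/-- Over a finite field of odd order in which `-1` is not a square, no two of the quadratic
forms `v₀ v₁`, `v₀² + v₁²`, `v₀²` are equivalent under `SL(2,F)` even up to scalars. -/
theorem threeQuadForms_not_equivalent (F : Type*) [Field F] [Fintype F]
    (hodd : Odd (Fintype.card F)) (hsq : ¬∃ x : F, x ^ 2 = -1) :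
    ∀ i j : Fin 3, i ≠ j →
      ¬∃ (g : Matrix.SpecialLinearGroup (Fin 2) F) (c : F),
        ∀ v : Fin 2 → F,
          threeQuadForms F i (Matrix.vecMul v (g : Matrix (Fin 2) (Fin 2) F)) =
            c * threeQuadForms F j v := by
  have h2 : (2 : F) ≠ 0 := by
    refine Ring.two_ne_zero fun h => ?_
    have := FiniteField.even_card_iff_char_two.mp h
    rw [Nat.odd_iff] at hodd
    omega
  have aniso : ∀ a b : F, a ^ 2 + b ^ 2 = 0 → a = 0 ∧ b = 0 := by
    intro a b hab
    rcases eq_or_ne b 0 with hb | hb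
    · subst hb
      simp only [ne_eq, OfNat.ofNat_ne_zero, not_false_eq_true, zero_pow, add_zero] at hab
      exact ⟨pow_eq_zero_iff (n := 2) (by norm_num) |>.mp hab, rfl⟩
    · exfalso
      exact hsq ⟨a / b, by field_simp; linear_combination hab⟩
  rintro i j hij ⟨g, c, h⟩
  have hdet : (g : Matrix (Fin 2) (Fin 2) F) 0 0 * (g : Matrix (Fin 2) (Fin 2) F) 1 1 -
      (g : Matrix (Fin 2) (Fin 2) F) 0 1 * (g : Matrix (Fin 2) (Fin 2) F) 1 0 = 1 := by
    rw [← Matrix.det_fin_two]; exact g.2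
  set M : Matrix (Fin 2) (Fin 2) F := (g : Matrix (Fin 2) (Fin 2) F) with hMdef
  have h10 := h ![1, 0]
  have h01 := h ![0, 1]
  have h11 := h ![1, 1]
  have hm1 := h ![1, -1]
  clear h
  rcases (show i = 0 ∨ i = 1 ∨ i = 2 by omega) with rfl | rfl | rfl <;>
    rcases (show j = 0 ∨ j = 1 ∨ j = 2 by omega) with rfl | rfl | rfl <;>
    simp only [threeQuadForms, Matrix.vecMul, dotProduct, Fin.sum_univ_two,
      Matrix.cons_val_zero, Matrix.cons_val_one, Matrix.head_cons, Matrix.cons_val_two,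
      Matrix.tail_cons, Matrix.vecHead, Matrix.cons_val',
      Matrix.empty_val', Matrix.cons_val_fin_one] at h10 h01 h11 hm1 ⊢
  -- (0,0)
  · exact hij rfl
  -- (0,1): Q1 ∼ Q2
  · refine hsq ⟨2 * c, ?_⟩
    have k1 : M 0 0 * M 1 1 + M 0 1 * M 1 0 = 0 := by linear_combination h11 - h10 - h01
    linear_combination (-4 * (M 1 0 * M 1 1)) * h10 + (-4 * c) * h01 +
      (M 0 0 * M 1 1 + M 0 1 * M 1 0) * k1 -
      (M 0 0 * M 1 1 - M 0 1 * M 1 0 + 1) * hdet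
  -- (0,2): Q1 ∼ Q3
  · have k : 2 * (M 0 0 * M 1 1 + M 0 1 * M 1 0) = 0 := by linear_combination h11 - hm1
    have k2 : M 0 0 * M 1 1 + M 0 1 * M 1 0 = 0 := (mul_eq_zero.mp k).resolve_left h2
    have k3 : M 1 0 * M 1 1 = 0 := by linear_combination h01
    rcases mul_eq_zero.mp k3 with he | hd
    · exact (one_ne_zero : (1 : F) ≠ 0) (by linear_combination k2 - hdet - 2 * (M 0 1) * he)
    · exact (one_ne_zero : (1 : F) ≠ 0) (by linear_combination -hdet - k2 + 2 * (M 0 0) * hd)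
  -- (1,0): Q2 ∼ Q1
  · have k : M 0 0 ^ 2 + M 0 1 ^ 2 = 0 := by linear_combination h10
    obtain ⟨ha, hb⟩ := aniso _ _ k
    exact (one_ne_zero : (1 : F) ≠ 0)
      (by linear_combination -hdet + (M 1 1) * ha - (M 1 0) * hb)
  -- (1,1)
  · exact hij rfl
  -- (1,2): Q2 ∼ Q3
  · have k : M 1 0 ^ 2 + M 1 1 ^ 2 = 0 := by linear_combination h01
    obtain ⟨he, hd⟩ := aniso _ _ k
    exact (one_ne_zero : (1 : F) ≠ 0)
      (by linear_combination -hdet + (M 0 0) * hd - (M 0 1) * he)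
  -- (2,0): Q3 ∼ Q1
  · have ka : M 0 0 ^ 2 = 0 := by linear_combination h10
    have ke : M 1 0 ^ 2 = 0 := by linear_combination h01
    have ha : M 0 0 = 0 := pow_eq_zero_iff (n := 2) (by norm_num) |>.mp ka
    have he : M 1 0 = 0 := pow_eq_zero_iff (n := 2) (by norm_num) |>.mp ke
    exact (one_ne_zero : (1 : F) ≠ 0)
      (by linear_combination -hdet + (M 1 1) * ha - (M 0 1) * he)
  -- (2,1): Q3 ∼ Q2
  · have k : 2 * (M 0 0 * M 1 0) = 0 := by linear_combination h11 - h10 - h01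
    have hae : M 0 0 * M 1 0 = 0 := (mul_eq_zero.mp k).resolve_left h2
    have hc2 : c ^ 2 = 0 := by
      linear_combination (M 0 0 * M 1 0) * hae - (M 1 0) ^ 2 * h10 - c * h01
    have hc : c = 0 := pow_eq_zero_iff (n := 2) (by norm_num) |>.mp hc2
    have ha : M 0 0 = 0 := by
      have : M 0 0 ^ 2 = 0 := by rw [← hc]; linear_combination h10
      exact pow_eq_zero_iff (n := 2) (by norm_num) |>.mp this
    have he : M 1 0 = 0 := by
      have : M 1 0 ^ 2 = 0 := by rw [← hc]; linear_combination h01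
      exact pow_eq_zero_iff (n := 2) (by norm_num) |>.mp this
    exact (one_ne_zero : (1 : F) ≠ 0)
      (by linear_combination -hdet + (M 1 1) * ha - (M 0 1) * he)
  -- (2,2)
  · exact hij rfl
end
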